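/- For (q₁, q₂) ∈ ℝ² with q₁² + q₂² < 1, set Γ₃ = √(1 − q₁² − q₂²), f = 1/(1 + Γ₃), x = (q₂, −q₁, 0) ∈ ℝ³, let x̂ be the 3×3 antisymmetric matrix with x̂v = x × v for all v, and define the 3×3 real matrix A = I + x̂ + f·x̂². Then for all real numbers p̃₁, p̃₂, with p̃ = (p̃₁, p̃₂, 0): ‖e₃ × (Aᵗ(e₃ × p̃))‖² = p̃₁² + p̃₂² − (q₂p̃₁ − q₁p̃₂)², where e₃ = (0,0,1) and ‖·‖ is the Euclidean norm on ℝ³. -/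

import Mathlib

open Matrix

/-- Identity from the proof of Proposition 4.1: with `A = I + x̂ + f·x̂²` the slice
parametrization of attitudes, for `p̃ = (p̃₁, p̃₂, 0)`,
`‖e₃ × (Aᵗ(e₃ × p̃))‖² = p̃₁² + p̃₂² − (q₂p̃₁ − q₁p̃₂)²`. -/
theorem stmt_11 (q₁ q₂ : ℝ) (hq : q₁^2 + q₂^2 < 1)
    (X : Matrix (Fin 3) (Fin 3) ℝ)
    (hX : ∀ v : Fin 3 → ℝ, X.mulVec v = crossProduct ![q₂, -q₁, 0] v) :
    letI Γ₃ : ℝ := Real.sqrt (1 - q₁^2 - q₂^2)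
    letI f : ℝ := 1 / (1 + Γ₃)
    letI A : Matrix (Fin 3) (Fin 3) ℝ := 1 + X + f • (X * X)
    ∀ pt₁ pt₂ : ℝ,
      letI w : Fin 3 → ℝ :=
        crossProduct ![0, 0, 1] (Aᵀ.mulVec (crossProduct ![0, 0, 1] ![pt₁, pt₂, 0]))
      (w 0)^2 + (w 1)^2 + (w 2)^2 = pt₁^2 + pt₂^2 - (q₂ * pt₁ - q₁ * pt₂)^2 := by
  have hX' : X = !![0, 0, -q₁; 0, 0, -q₂; q₁, q₂, 0] := by
    ext i j
    have h := congrFun (hX (Pi.single j 1)) i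
    simp [Matrix.mulVec, dotProduct, crossProduct] at h
    fin_cases i <;> fin_cases j <;>
      simp_all [Fin.sum_univ_three, Pi.single_apply]
  subst hX'
  intro pt₁ pt₂
  set Γ₃ : ℝ := Real.sqrt (1 - q₁^2 - q₂^2) with hΓdef
  have hΓnn : 0 ≤ Γ₃ := Real.sqrt_nonneg _
  have hΓsq : Γ₃ ^ 2 = 1 - q₁^2 - q₂^2 := Real.sq_sqrt (by linarith)
  have hne : (1 : ℝ) + Γ₃ ≠ 0 := by positivity
  simp only [crossProduct, Matrix.mulVec, dotProduct]
  simp [Matrix.transpose, Matrix.mul_apply, Matrix.one_apply, Fin.sum_univ_three,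
    Matrix.smul_apply, Matrix.vecHead, Matrix.vecTail, Function.comp]
  field_simp
  linear_combination ((q₂*pt₁ - q₁*pt₂)^2) * hΓsq
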